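/- For all real numbers x, y in the interval [-C, C] with C ≥ 2 and more generally for any C > 0 setting C_m = max{C, 2}: σ(x)(1-σ(x))(y-x)² ≤ 2·C_m·D(σ(x)‖σ(y)). -/

import Mathlib

noncomputable def logistic (x : ℝ) : ℝ := Real.exp x / (1 + Real.exp x)

noncomputable def klBer (p q : ℝ) : ℝ :=
  p * Real.log (p / q) + (1 - p) * Real.log ((1 - p) / (1 - q))

open Real
set_option maxHeartbeats 1000000

lemma one_add_exp_pos (x : ℝ) : 0 < 1 + exp x := by positivity

lemma logistic_pos (x : ℝ) : 0 < logistic x := by unfold logistic; positivity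

lemma logistic_lt_one (x : ℝ) : logistic x < 1 := by
  unfold logistic
  rw [div_lt_one (one_add_exp_pos x)]; linarith [exp_pos x]

lemma one_sub_logistic (x : ℝ) : 1 - logistic x = 1 / (1 + exp x) := by
  unfold logistic; field_simp; ring

lemma logistic_neg (x : ℝ) : logistic (-x) = 1 - logistic x := by
  rw [one_sub_logistic]
  unfold logistic
  rw [exp_neg]
  have h := exp_pos x
  field_simp
  ring

lemma hasDerivAt_logistic (x : ℝ) :
    HasDerivAt logistic (logistic x * (1 - logistic x)) x := by
  have hd : HasDerivAt (fun x => 1 + exp x) (exp x) x := by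
    exact (Real.hasDerivAt_exp x).const_add 1
  have h : HasDerivAt (fun x => exp x / (1 + exp x))
      ((exp x * (1 + exp x) - exp x * exp x) / (1 + exp x)^2) x :=
    (Real.hasDerivAt_exp x).div hd (ne_of_gt (one_add_exp_pos x))
  convert h using 1
  · rfl
  rw [one_sub_logistic]
  unfold logistic
  have := (one_add_exp_pos x).ne'
  field_simp
  ring

lemma klBer_self (p : ℝ) : klBer p p = 0 := by
  unfold klBer
  rcases eq_or_ne p 0 with h | h
  · simp [h]
  rcases eq_or_ne p 1 with h1 | h1
  · simp [h1]
  rw [div_self h, div_self (by intro hc; apply h1; linarith : 1 - p ≠ 0), log_one]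
  ring

lemma hasDerivAt_kl (x t : ℝ) :
    HasDerivAt (fun y => klBer (logistic x) (logistic y))
      (logistic t - logistic x) t := by
  set p := logistic x with hp'
  have hp : 0 < p := logistic_pos x
  have hp1 : p < 1 := logistic_lt_one x
  have hq : 0 < logistic t := logistic_pos t
  have hq1 : logistic t < 1 := logistic_lt_one t
  have hL := hasDerivAt_logistic t
  have f1 : HasDerivAt (fun y => p / logistic y)
      ((0 * logistic t - p * (logistic t * (1 - logistic t))) / (logistic t)^2) t :=
    (hasDerivAt_const t p).div hL hq.ne'
  have g1 : HasDerivAt (fun y => log (p / logistic y))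
      (((0 * logistic t - p * (logistic t * (1 - logistic t))) / (logistic t)^2) /
        (p / logistic t)) t :=
    f1.log (by positivity)
  have h2 : HasDerivAt (fun y => (1:ℝ) - logistic y) (-(logistic t * (1 - logistic t))) t := by
    exact hL.const_sub 1
  have f2 : HasDerivAt (fun y => (1 - p) / (1 - logistic y))
      ((0 * (1 - logistic t) - (1 - p) * (-(logistic t * (1 - logistic t)))) /
        (1 - logistic t)^2) t :=
    (hasDerivAt_const t (1 - p)).div h2 (by linarith)
  have g2 : HasDerivAt (fun y => log ((1 - p) / (1 - logistic y)))
      (((0 * (1 - logistic t) - (1 - p) * (-(logistic t * (1 - logistic t)))) /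
        (1 - logistic t)^2) / ((1 - p) / (1 - logistic t))) t :=
    f2.log (ne_of_gt (div_pos (by linarith) (by linarith)))
  have g1' : HasDerivAt (fun y => log (p / logistic y)) (-(1 - logistic t)) t := by
    convert g1 using 1
    field_simp
    ring
  have g2' : HasDerivAt (fun y => log ((1 - p) / (1 - logistic y))) (logistic t) t := by
    convert g2 using 1
    have h1p : 1 - p ≠ 0 := by linarith
    have h1q : (1:ℝ) - logistic t ≠ 0 := by linarith
    field_simp
    ring
  have total := (g1'.const_mul p).add (g2'.const_mul (1 - p))
  exact total.congr_deriv (by ring)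

lemma cubic_le_exp {r : ℝ} (hr : 0 ≤ r) : 1 + r + r^2/2 + r^3/6 ≤ exp r := by
  have h := Real.sum_le_exp_of_nonneg hr 4
  simp [Finset.sum_range_succ, Nat.factorial] at h
  nlinarith [h]

lemma three_le_T {C r T : ℝ} (hr : 0 ≤ r) (hC : 2 ≤ C) (hT : 1 + r + r^2/2 + r^3/6 ≤ T)
    (hii : C*(T-1) < r*T) : 3 ≤ T := by
  have hT1 : 1 ≤ T := by nlinarith
  have h2 : 2*(T-1) < r*T := by
    nlinarith [mul_nonneg (by linarith : (0:ℝ) ≤ C - 2) (by linarith : (0:ℝ) ≤ T - 1)]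
  by_contra h
  push_neg at h
  rcases le_or_gt r (3/2) with h1 | h1
  · nlinarith [mul_nonneg (mul_nonneg hr hr) hr, sq_nonneg r,
      mul_nonneg (mul_nonneg (mul_nonneg hr hr) hr) hr]
  · nlinarith

lemma poly2a {r T : ℝ} (hr : 0 ≤ r) (hT : 1 + r + r^2/2 + r^3/6 ≤ T) :
    0 ≤ (27/200)*(2*T - 2 - r)*T + (2*T - 2 - r*T) := by
  have hd : 0 ≤ T - (1 + r + r^2/2 + r^3/6) := by linarith
  nlinarith [mul_nonneg hd hd, mul_nonneg hd hr, mul_nonneg (mul_nonneg hd hr) hr,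
    mul_nonneg (mul_nonneg hr hr) hr, sq_nonneg (r - 1), sq_nonneg r, sq_nonneg (r*r - r),
    mul_nonneg (mul_nonneg (mul_nonneg hr hr) hr) hr,
    mul_nonneg (mul_nonneg (mul_nonneg (mul_nonneg hr hr) hr) hr) hr,
    mul_nonneg (mul_nonneg hd hd) hr]

lemma red (C : ℝ) (hC : 0 < C) {x y : ℝ} (hx : -C ≤ x) (hyC : y ≤ C) (hxy : x ≤ y) :
    logistic x * (1 - logistic x) * (y - x) ≤ max C 2 * (logistic y - logistic x) := by
  set M := max C 2 with hM
  set A := exp x with hA'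
  set r := y - x with hr'
  set T := exp r with hT'
  set ec := exp C with hec'
  have hA : 0 < A := exp_pos x
  have hT0 : 0 < T := exp_pos r
  have hec : 0 < ec := exp_pos C
  have hr : 0 ≤ r := by simp [hr']; linarith
  have hcub : 1 + r + r^2/2 + r^3/6 ≤ T := cubic_le_exp hr
  have hT1 : 1 + r ≤ T := by nlinarith
  have hM2 : (2:ℝ) ≤ M := le_max_right _ _
  have hMC : C ≤ M := le_max_left _ _
  have hAec : 1 ≤ A * ec := by
    rw [hA', hec', ← exp_add]
    have : (0:ℝ) ≤ x + C := by linarith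
    simpa using one_le_exp this
  have hATec : A * T ≤ ec := by
    rw [hA', hT', hec', ← exp_add]
    apply exp_le_exp.2
    simp [hr']
    linarith
  have hST : ec * (1 + (r - C)) ≤ T := by
    have h1 : (r - C) + 1 ≤ exp (r - C) := add_one_le_exp _
    have h2 : T = ec * exp (r - C) := by rw [hT', hec', ← exp_add]; ring_nf
    rw [h2]
    have := mul_le_mul_of_nonneg_left h1 hec.le
    linarith
  have key : r * (1 + A*T) ≤ M * ((T-1) * (1+A)) := by
    rcases le_or_gt (r*T) (M*(T-1)) with h | h
    · -- easy case
      have h1 : r ≤ M*(T-1) := by nlinarith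
      nlinarith [mul_le_mul_of_nonneg_left h hA.le]
    · -- hard case
      have key2 : r*T*(1+ec) ≤ M*((T-1)*(T+ec)) := by
        rcases le_or_gt C 2 with hC2 | hC2
        · -- M = 2
          have hM2' : M = 2 := max_eq_right hC2
          have hec_ub : ec ≤ 200/27 := by
            rw [hec']
            have h1 : exp C ≤ exp 2 := exp_le_exp.2 hC2
            have h2 : exp 2 = exp 1 * exp 1 := by rw [← exp_add]; norm_num
            nlinarith [exp_one_lt_d9, exp_pos 1]
          have hec_lb : 1 ≤ ec := by rw [hec']; exact one_le_exp hC.le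
          have poly := poly2a hr hcub
          rw [hM2']
          rcases le_or_gt 0 (2*T - 2 - r*T) with hs | hs
          · nlinarith [mul_nonneg (by linarith : (0:ℝ) ≤ ec - 1) hs,
              mul_nonneg (by linarith : (0:ℝ) ≤ T - (1+r)) hT0.le]
          · nlinarith [mul_nonneg (by linarith : (0:ℝ) ≤ 200/27 - ec)
              (by linarith : (0:ℝ) ≤ -(2*T - 2 - r*T)), poly]
        · -- M = C
          have hMC' : M = C := max_eq_left hC2.le
          rw [hMC'] at h ⊢
          have hii : C*(T-1) < r*T := by nlinarith
          have f1 : C < T := by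
            by_contra hcon
            push_neg at hcon
            nlinarith
          have f2 : 3 ≤ T := three_le_T hr hC2.le hcub hii
          have hec5 : 5 ≤ ec := by
            have := cubic_le_exp (by linarith : (0:ℝ) ≤ C)
            rw [← hec'] at this
            nlinarith
          rcases le_or_gt r C with hrC | hrC
          · -- β : r ≤ C
            have hTec : T ≤ ec := by rw [hT', hec']; exact exp_le_exp.2 (by linarith)
            nlinarith [mul_le_mul_of_nonneg_left hST hC.le,
              mul_nonneg (mul_nonneg hec.le (by linarith : (0:ℝ) ≤ C - r))
                (by linarith : (0:ℝ) ≤ T - C),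
              mul_nonneg (mul_nonneg hC.le hT0.le) (by linarith : (0:ℝ) ≤ T - 3),
              mul_nonneg (by linarith : (0:ℝ) ≤ C - r) hT0.le]
          · -- α : C < r
            have hTec : ec ≤ T := by rw [hT', hec']; exact exp_le_exp.2 (by linarith)
            have hTec2 : T ≤ ec * ec := by nlinarith
            have hr2C : r ≤ 2*C := by
              have h1 : exp r ≤ exp (2*C) := by
                rw [show exp (2*C) = ec * ec by rw [hec', ← exp_add]; ring_nf]
                rw [← hT']; exact hTec2
              exact (exp_le_exp.1 h1)
            have a1 : C*(ec*(1+(r-C)))*T ≤ C*T*T := by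
              have := mul_le_mul_of_nonneg_left hST hC.le
              exact mul_le_mul_of_nonneg_right this hT0.le
            nlinarith [a1,
              mul_nonneg (mul_nonneg (by linarith : (0:ℝ) ≤ r - C)
                (by linarith : (0:ℝ) ≤ C - 1)) (mul_nonneg hec.le hT0.le),
              mul_nonneg (mul_nonneg hC.le hT0.le) (by linarith : (0:ℝ) ≤ ec - 5),
              mul_nonneg (mul_nonneg hC.le hT0.le) (by linarith : (0:ℝ) ≤ T - ec),
              mul_nonneg (by linarith : (0:ℝ) ≤ 2*C - r) hT0.le,
              mul_nonneg hC.le hT0.le]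
      -- combine key2 with reduction from A to ec/T
      have prod : 0 ≤ (ec - A*T) * (r*T - M*(T-1)) :=
        mul_nonneg (by linarith) (by linarith)
      have keyT : (r * (1 + A*T))*T ≤ (M * ((T-1) * (1+A)))*T := by nlinarith [key2, prod]
      exact le_of_mul_le_mul_right keyT hT0
  -- convert to logistic form
  have hly : exp y = A * T := by rw [hA', hT', ← exp_add, hr']; ring_nf
  have h1A : 0 < 1 + A := by linarith
  have h1AT : 0 < 1 + A*T := by nlinarith
  have expand : M * (logistic y - logistic x) - logistic x * (1 - logistic x) * (y - x)
      = (M * ((T-1) * (1+A)) - r * (1 + A*T)) * A / ((1+A)^2 * (1+A*T)) := by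
    rw [one_sub_logistic]
    unfold logistic
    rw [hly, ← hA', ← hr']
    field_simp
    ring
  have hfinal : 0 ≤ M * (logistic y - logistic x) - logistic x * (1 - logistic x) * (y - x) := by
    rw [expand]
    apply div_nonneg
    · exact mul_nonneg (by linarith) hA.le
    · positivity
  rw [← hr'] at hfinal
  linarith

theorem stmt_1 (C : ℝ) (hC : 0 < C) (x y : ℝ)
    (hx : x ∈ Set.Icc (-C) C) (hy : y ∈ Set.Icc (-C) C) :
    logistic x * (1 - logistic x) * (y - x) ^ 2 ≤
      2 * max C 2 * klBer (logistic x) (logistic y) := by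
  obtain ⟨hx1, hx2⟩ := hx
  obtain ⟨hy1, hy2⟩ := hy
  set M := max C 2 with hM
  set p := logistic x with hp'
  set c := p * (1 - p) with hc'
  set F : ℝ → ℝ := fun t => 2 * M * klBer p (logistic t) - c * (t - x)^2 with hF'
  have hFd : ∀ t, HasDerivAt F (2 * M * (logistic t - p) - c * (2 * (t - x))) t := by
    intro t
    have h1 := (hasDerivAt_kl x t).const_mul (2 * M)
    have h2 : HasDerivAt (fun t : ℝ => (t - x)^2) (2 * (t - x)) t := by
      have := ((hasDerivAt_id t).sub_const x).pow 2
      exact this.congr_deriv (by simp)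
    exact h1.sub (h2.const_mul c)
  have hdiff : Differentiable ℝ F := fun t => (hFd t).differentiableAt
  have hFx : F x = 0 := by simp [hF', hp', klBer_self]
  have hgoal : 0 ≤ F y := by
    rcases le_total x y with hxy | hxy
    · have hmono : MonotoneOn F (Set.Icc x C) := by
        apply monotoneOn_of_deriv_nonneg (convex_Icc x C) hdiff.continuous.continuousOn
          hdiff.differentiableOn
        intro t ht
        rw [interior_Icc] at ht
        rw [(hFd t).deriv]
        have hred := red C hC hx1 ht.2.le (le_of_lt ht.1)
        rw [← hp', ← hM] at hred
        rw [hc']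
        nlinarith [hred]
      have := hmono (Set.mem_Icc.2 ⟨le_refl x, hx2⟩) (Set.mem_Icc.2 ⟨hxy, hy2⟩) hxy
      linarith
    · have hanti : AntitoneOn F (Set.Icc (-C) x) := by
        apply antitoneOn_of_deriv_nonpos (convex_Icc (-C) x) hdiff.continuous.continuousOn
          hdiff.differentiableOn
        intro t ht
        rw [interior_Icc] at ht
        rw [(hFd t).deriv]
        have hred := red C hC (by linarith : -C ≤ -x) (by linarith [ht.1] : -t ≤ C)
          (by linarith [ht.2] : -x ≤ -t)
        rw [logistic_neg, logistic_neg, ← hp', ← hM] at hred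
        rw [hc']
        nlinarith [hred]
      have := hanti (Set.mem_Icc.2 ⟨hy1, hxy⟩) (Set.mem_Icc.2 ⟨hx1, le_refl x⟩) hxy
      linarith
  have hFy : F y = 2 * M * klBer p (logistic y) - c * (y - x)^2 := rfl
  rw [hFy] at hgoal
  linarith
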